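/- In a hypertree H, there exists an edge e and a vertex v ∈ e such that for every other edge e' ≠ e, e' ∩ e ⊆ {v}. -/

import Mathlib

/-- A path in the hypergraph with edge set `E`: a sequence
`v₀, e₀, v₁, e₁, …, e_{m-1}, v_m` with distinct edges `eᵢ ∈ E`, distinct vertices
(except that the first and last vertex may coincide), and `vᵢ, vᵢ₊₁ ∈ eᵢ`. -/
structure HPath {V : Type} (E : Set (Set V)) where
  m : ℕ
  vert : Fin (m + 1) → V
  edge : Fin m → Set V
  edge_mem : ∀ i, edge i ∈ E
  edge_inj : Function.Injective edge
  vert_almost_inj : ∀ i j : Fin (m + 1), vert i = vert j →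
    i = j ∨ (i = 0 ∧ j = Fin.last m) ∨ (j = 0 ∧ i = Fin.last m)
  mem_left : ∀ i : Fin m, vert i.castSucc ∈ edge i
  mem_right : ∀ i : Fin m, vert i.succ ∈ edge i

/-- The first vertex of a path. -/
def HPath.first {V : Type} {E : Set (Set V)} (p : HPath E) : V := p.vert 0

/-- The last vertex of a path. -/
def HPath.last {V : Type} {E : Set (Set V)} (p : HPath E) : V := p.vert (Fin.last p.m)

/-- A cycle is a path with `v₀ = v_m` and more than one edge. -/
def HPath.IsCycle {V : Type} {E : Set (Set V)} (p : HPath E) : Prop :=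
  p.first = p.last ∧ 1 < p.m

/-- The hypergraph with edge set `E` is connected on the vertex set `W`. -/
def ConnectedOn {V : Type} (W : Set V) (E : Set (Set V)) : Prop :=
  ∀ v ∈ W, ∀ v' ∈ W, ∃ p : HPath E, p.first = v ∧ p.last = v'

/-- `(W, E)` is a hypertree: every edge is a subset of `W` of size at least 2,
the hypergraph is connected on `W`, and it has no cycles. -/
def IsHypertreeOn {V : Type} (W : Set V) (E : Set (Set V)) : Prop :=
  (∀ e ∈ E, e ⊆ W ∧ 2 ≤ e.ncard) ∧ ConnectedOn W E ∧ ∀ p : HPath E, ¬ p.IsCycle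


section Aux
variable {V : Type} {E : Set (Set V)}

/-- From a cyclic sequence of vertices/edges, build a cycle, contradicting no-cycles. -/
lemma false_of_cycle_fun (hnc : ∀ p : HPath E, ¬ p.IsCycle) {k : ℕ} (hk : 2 ≤ k)
    (w : Fin k → V) (g : Fin k → Set V)
    (hw : Function.Injective w) (hg : Function.Injective g) (hgE : ∀ i, g i ∈ E)
    (h1 : ∀ i, w i ∈ g i)
    (h2 : ∀ i : Fin k, w ⟨(i.val + 1) % k, Nat.mod_lt _ (by omega)⟩ ∈ g i) : False := by
  have hk0 : 0 < k := by omega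
  refine hnc
    { m := k
      vert := fun i => w ⟨i.val % k, Nat.mod_lt _ hk0⟩
      edge := g
      edge_mem := hgE
      edge_inj := hg
      vert_almost_inj := ?_
      mem_left := ?_
      mem_right := ?_ } ?_
  · intro i j h
    have hv : i.val % k = j.val % k := by
      have := hw h
      exact congrArg Fin.val this
    have hi := i.isLt
    have hj := j.isLt
    have e1 : i.val % k = i.val ∨ (i.val = k ∧ i.val % k = 0) := by
      rcases Nat.lt_or_ge i.val k with h'' | h''
      · exact Or.inl (Nat.mod_eq_of_lt h'')
      · have : i.val = k := by omega
        exact Or.inr ⟨this, by simp [this]⟩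
    have e2 : j.val % k = j.val ∨ (j.val = k ∧ j.val % k = 0) := by
      rcases Nat.lt_or_ge j.val k with h'' | h''
      · exact Or.inl (Nat.mod_eq_of_lt h'')
      · have : j.val = k := by omega
        exact Or.inr ⟨this, by simp [this]⟩
    simp only [Fin.ext_iff, Fin.val_last, Fin.val_zero]
    omega
  · intro i
    have hcast : ((i.castSucc : Fin (k + 1)).val % k) = i.val := by
      simp [Nat.mod_eq_of_lt i.isLt]
    convert h1 i using 2
    exact Fin.ext hcast
  · intro i
    convert h2 i using 2
    exact Fin.ext (by simp [Fin.val_succ])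
  · exact ⟨congrArg w (Fin.ext (by simp)), hk⟩


/-- Cycle gadget A: a vertex `v_j` with `j ≤ m-2` lying in the last edge gives a cycle. -/
lemma cycA (hnc : ∀ p : HPath E, ¬ p.IsCycle) (p : HPath E)
    (hinj : Function.Injective p.vert) (j : ℕ) (hj : j + 2 ≤ p.m)
    (hmem : p.vert ⟨j, by omega⟩ ∈ p.edge ⟨p.m - 1, by omega⟩) : False := by
  apply false_of_cycle_fun hnc (k := p.m - j) (by omega)
    (fun i => p.vert ⟨j + i.val, by omega⟩)
    (fun i => p.edge ⟨j + i.val, by omega⟩)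
  · intro a b h
    have := hinj h
    have hv : j + a.val = j + b.val := congrArg Fin.val this
    exact Fin.ext (by omega)
  · intro a b h
    have := p.edge_inj h
    have hv : j + a.val = j + b.val := congrArg Fin.val this
    exact Fin.ext (by omega)
  · intro i
    exact p.edge_mem _
  · intro i
    have := p.mem_left ⟨j + i.val, by omega⟩
    simpa using this
  · intro i
    rcases Nat.lt_or_ge (i.val + 1) (p.m - j) with hlt | hge
    · have := p.mem_right ⟨j + i.val, by omega⟩
      simp only [Fin.succ_mk] at this
      convert this using 2
      exact Fin.ext (by simp only [Nat.mod_eq_of_lt hlt]; omega)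
    · have hi : i.val + 1 = p.m - j := by have := i.isLt; omega
      convert hmem using 2
      · exact Fin.ext (by simp only [Fin.val_mk]; omega)
      · apply Fin.ext
        show j + (↑i + 1) % (p.m - j) = j
        have h0 : (↑i + 1) % (p.m - j) = 0 := by rw [hi]; exact Nat.mod_self _
        omega


/-- Cycle gadget B: a cycle `v_j, e_j, …, v_{m-1}, e_{m-1}, w, c, v_j`. -/
lemma cycB (hnc : ∀ p : HPath E, ¬ p.IsCycle) (p : HPath E)
    (hinj : Function.Injective p.vert) (j : ℕ) (hj : j < p.m) (w : V) (c : Set V)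
    (hcE : c ∈ E)
    (hce : ∀ i : ℕ, j ≤ i → (h : i < p.m) → c ≠ p.edge ⟨i, h⟩)
    (hwv : ∀ i : ℕ, (h : i < p.m) → w ≠ p.vert ⟨i, by omega⟩)
    (hwf : w ∈ p.edge ⟨p.m - 1, by omega⟩) (hwc : w ∈ c)
    (hjc : p.vert ⟨j, by omega⟩ ∈ c) : False := by
  apply false_of_cycle_fun hnc (k := p.m - j + 1) (by omega)
    (fun i => if h : j + i.val < p.m then p.vert ⟨j + i.val, by omega⟩ else w)
    (fun i => if h : j + i.val < p.m then p.edge ⟨j + i.val, h⟩ else c)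
  · intro a b h
    have ha := a.isLt
    have hb := b.isLt
    dsimp only at h
    split_ifs at h with h1 h2 h2
    · have hv : j + a.val = j + b.val := congrArg Fin.val (hinj h)
      exact Fin.ext (by omega)
    · exact absurd h.symm (hwv _ (by omega))
    · exact absurd h (hwv _ (by omega))
    · exact Fin.ext (by omega)
  · intro a b h
    have ha := a.isLt
    have hb := b.isLt
    dsimp only at h
    split_ifs at h with h1 h2 h2
    · have hv : j + a.val = j + b.val := congrArg Fin.val (p.edge_inj h)
      exact Fin.ext (by omega)
    · exact absurd h.symm (hce _ (by omega) (by omega))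
    · exact absurd h (hce _ (by omega) (by omega))
    · exact Fin.ext (by omega)
  · intro i
    by_cases h : j + i.val < p.m
    · rw [dif_pos h]; exact p.edge_mem _
    · rw [dif_neg h]; exact hcE
  · intro i
    by_cases h : j + i.val < p.m
    · rw [dif_pos h, dif_pos h]
      simpa using p.mem_left ⟨j + i.val, h⟩
    · rw [dif_neg h, dif_neg h]
      exact hwc
  · intro i
    have hik := i.isLt
    rcases Nat.lt_or_ge (j + i.val) (p.m - 1) with ha | ha
    · have hm1 : (i.val + 1) % (p.m - j + 1) = i.val + 1 := Nat.mod_eq_of_lt (by omega)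
      simp only [hm1]
      rw [dif_pos (show j + (i.val + 1) < p.m by omega), dif_pos (show j + i.val < p.m by omega)]
      have := p.mem_right ⟨j + i.val, by omega⟩
      simp only [Fin.succ_mk] at this
      convert this using 2
      exact Fin.ext (Nat.add_assoc _ _ _).symm
    rcases Nat.lt_or_ge (j + i.val) p.m with hb | hb
    · have hm1 : (i.val + 1) % (p.m - j + 1) = i.val + 1 := Nat.mod_eq_of_lt (by omega)
      simp only [hm1]
      rw [dif_neg (show ¬ j + (i.val + 1) < p.m by omega), dif_pos hb]
      convert hwf using 2
      exact Fin.ext (by simp only [Fin.val_mk]; omega)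
      
    · have hm1 : (i.val + 1) % (p.m - j + 1) = 0 := by
        rw [show i.val + 1 = p.m - j + 1 from by omega]
        exact Nat.mod_self _
      simp only [hm1]
      rw [dif_pos (show j + 0 < p.m by omega), dif_neg (show ¬ j + i.val < p.m by omega)]
      convert hjc using 2
      exact Fin.ext (Nat.add_zero j)


/-- Extension gadget: replace the last vertex of `p` by `w` and append edge `c`
to a new vertex `x`, giving a strictly longer path. -/
lemma extend_path (p : HPath E) (hinj : Function.Injective p.vert) (hm : 1 ≤ p.m)
    (w x : V) (c : Set V) (hcE : c ∈ E) (hce : ∀ i, c ≠ p.edge i)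
    (hwf : w ∈ p.edge ⟨p.m - 1, by omega⟩) (hwc : w ∈ c) (hxc : x ∈ c)
    (hwv : ∀ i : ℕ, (h : i < p.m) → w ≠ p.vert ⟨i, by omega⟩)
    (hxv : ∀ i : ℕ, (h : i < p.m) → x ≠ p.vert ⟨i, by omega⟩)
    (hxw : x ≠ w) : ∃ q : HPath E, q.m = p.m + 1 := by
  refine ⟨{
    m := p.m + 1
    vert := fun i => if h : i.val < p.m then p.vert ⟨i.val, by omega⟩
      else if i.val = p.m then w else x
    edge := fun i => if h : i.val < p.m then p.edge ⟨i.val, h⟩ else c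
    edge_mem := ?_
    edge_inj := ?_
    vert_almost_inj := ?_
    mem_left := ?_
    mem_right := ?_ }, rfl⟩
  · intro i
    by_cases h : i.val < p.m
    · rw [dif_pos h]; exact p.edge_mem _
    · rw [dif_neg h]; exact hcE
  · intro a b h
    have ha := a.isLt
    have hb := b.isLt
    dsimp only at h
    split_ifs at h with h1 h2 h2
    · have hv : a.val = b.val := by
        have := congrArg Fin.val (p.edge_inj h)
        simpa using this
      exact Fin.ext (by omega)
    · exact absurd h.symm (hce _)
    · exact absurd h (hce _)
    · exact Fin.ext (by omega)
  · intro a b h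
    left
    have ha := a.isLt
    have hb := b.isLt
    split_ifs at h
    all_goals first
      | (exact Fin.ext (by omega))
      | (exact absurd h.symm hxw)
      | (exact absurd h hxw)
      | (exact absurd h.symm (hwv _ (by omega)))
      | (exact absurd h (hwv _ (by omega)))
      | (exact absurd h.symm (hxv _ (by omega)))
      | (exact absurd h (hxv _ (by omega)))
      | (exact Fin.ext (by
          have h' := congrArg Fin.val (hinj h)
          simp only [Fin.val_mk] at h'
          omega))
  · intro i
    have hi := i.isLt
    rcases Nat.lt_or_ge i.val p.m with h | h
    · rw [dif_pos (show (i.castSucc).val < p.m from h), dif_pos h]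
      simpa using p.mem_left ⟨i.val, h⟩
    · have hieq : i.val = p.m := by omega
      rw [dif_neg (show ¬ (i.castSucc).val < p.m by simpa using by omega),
        dif_neg (by omega)]
      rw [if_pos (show (i.castSucc).val = p.m from hieq)]
      exact hwc
  · intro i
    have hi := i.isLt
    have hsucc : (i.succ).val = i.val + 1 := rfl
    rcases Nat.lt_or_ge (i.val + 1) p.m with h | h
    · rw [dif_pos (show (i.succ).val < p.m from by omega), dif_pos (by omega)]
      have := p.mem_right ⟨i.val, by omega⟩
      simp only [Fin.succ_mk] at this
      convert this using 2
      exact Fin.ext hsucc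
    · rcases Nat.lt_or_ge i.val p.m with h' | h'
      · have hieq : i.val + 1 = p.m := by omega
        rw [dif_neg (show ¬ (i.succ).val < p.m by omega), dif_pos h']
        rw [if_pos (show (i.succ).val = p.m from hieq)]
        convert hwf using 2
        exact Fin.ext (by simp only [Fin.val_mk]; omega)
      · have hieq : i.val = p.m := by omega
        rw [dif_neg (show ¬ (i.succ).val < p.m by omega), dif_neg (by omega)]
        rw [if_neg (show ¬ (i.succ).val = p.m by omega)]
        exact hxc

/-- A path of length 1 exists. -/
lemma exists_path_one (h2 : ∀ e ∈ E, 2 ≤ e.ncard) (hE : E.Nonempty) :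
    ∃ p : HPath E, p.m = 1 ∧ Function.Injective p.vert := by
  classical
  obtain ⟨e, he⟩ := hE
  have hfin : e.Finite := by
    by_contra hinf
    have h0 := Set.Infinite.ncard (hinf)
    have := h2 e he
    omega
  obtain ⟨a, b, ha, hb, hab⟩ := (Set.one_lt_ncard_iff hfin).mp (by have := h2 e he; omega)
  refine ⟨{
    m := 1
    vert := fun i => if i.val = 0 then a else b
    edge := fun _ => e
    edge_mem := fun _ => he
    edge_inj := fun i j _ => Subsingleton.elim i j
    vert_almost_inj := ?_
    mem_left := ?_
    mem_right := ?_ }, rfl, ?_⟩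
  · intro i j h
    left
    have hi := i.isLt
    have hj := j.isLt
    split_ifs at h with h1 h2 h2
    · exact Fin.ext (by omega)
    · exact absurd h hab
    · exact absurd h.symm hab
    · exact Fin.ext (by omega)
  · intro i
    have h0 : (i.castSucc).val = 0 := by rw [Fin.coe_castSucc]; have := i.isLt; omega
    simpa [h0] using ha
  · intro i
    have h0 : (i.succ).val = 1 := by rw [Fin.val_succ]; have := i.isLt; omega
    simpa [h0] using hb
  · intro i j h
    have hi : i.val < 2 := i.isLt
    have hj : j.val < 2 := j.isLt
    dsimp only at h
    split_ifs at h with h1 h2 h2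
    · exact Fin.ext (by omega)
    · exact absurd h hab
    · exact absurd h.symm hab
    · exact Fin.ext (by omega)

end Aux

/-- A hypertree (with at least one edge) has a "leaf edge": an edge
`e` and a vertex `v ∈ e` such that every other edge meets `e` only in `v`. -/
theorem hypertree_leaf_edge {V : Type} [Fintype V] (E : Set (Set V))
    (hT : IsHypertreeOn Set.univ E) (hE : E.Nonempty) :
    ∃ e ∈ E, ∃ v ∈ e, ∀ e' ∈ E, e' ≠ e → e' ∩ e ⊆ {v} := by
  classical
  obtain ⟨hcard, -, hnc⟩ := hT
  have hcard2 : ∀ e ∈ E, 2 ≤ e.ncard := fun e he => (hcard e he).2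
  have hbd : ∀ p : HPath E, p.m ≤ Nat.card E := by
    intro p
    have hinj : Function.Injective (fun i : Fin p.m => (⟨p.edge i, p.edge_mem i⟩ : E)) := by
      intro i j h
      exact p.edge_inj (congrArg Subtype.val h)
    have := Nat.card_le_card_of_injective _ hinj
    simpa using this
  obtain ⟨p1, hp1, hp1inj⟩ := exists_path_one hcard2 hE
  set P : ℕ → Prop := fun n => ∃ p : HPath E, p.m = n with hPdef
  have hP1 : P 1 := ⟨p1, hp1⟩
  set B := Nat.card E with hB
  have h1B : 1 ≤ B := by have := hbd p1; omega
  set M := Nat.findGreatest P B with hMdef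
  have hM : P M := Nat.findGreatest_spec h1B hP1
  have hM1le : 1 ≤ M := Nat.le_findGreatest h1B hP1
  have hmax : ∀ n, P n → n ≤ M := fun n hn =>
    Nat.le_findGreatest (by obtain ⟨q, hq⟩ := hn; rw [← hq]; exact hbd q) hn
  -- get a maximal path with injective vertex function
  have hex : ∃ p : HPath E, p.m = M ∧ Function.Injective p.vert := by
    rcases Nat.lt_or_ge M 2 with hM2 | hM2
    · exact ⟨p1, by omega, hp1inj⟩
    · obtain ⟨p, hpM⟩ := hM
      refine ⟨p, hpM, ?_⟩
      intro i j h
      rcases p.vert_almost_inj i j h with h' | ⟨hi, hj⟩ | ⟨hj, hi⟩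
      · exact h'
      · subst hi; subst hj
        exact absurd (⟨h, by omega⟩ : p.IsCycle) (hnc p)
      · subst hi; subst hj
        exact absurd (⟨h.symm, by omega⟩ : p.IsCycle) (hnc p)
  obtain ⟨p, hpM, hinj⟩ := hex
  have hm1 : 1 ≤ p.m := by omega
  refine ⟨p.edge ⟨p.m - 1, by omega⟩, p.edge_mem _, p.vert ⟨p.m - 1, by omega⟩, ?_, ?_⟩
  · exact p.mem_left ⟨p.m - 1, by omega⟩
  · intro e' he' hne w hw
    simp only [Set.mem_inter_iff] at hw
    simp only [Set.mem_singleton_iff]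
    by_contra hwv0
    by_cases hvert : ∃ t : Fin (p.m + 1), w = p.vert t
    · obtain ⟨t, ht⟩ := hvert
      have htv := t.isLt
      rcases Nat.lt_or_ge t.val (p.m - 1) with h1 | h1
      · -- w = v_t with t ≤ m-2 : cycle A
        apply cycA hnc p hinj t.val (by omega)
        have heta : (⟨t.val, by omega⟩ : Fin (p.m + 1)) = t := Fin.ext rfl
        rw [heta, ← ht]
        exact hw.2
      rcases Nat.lt_or_ge t.val p.m with h2 | h2
      · -- t.val = p.m - 1 : contradiction with hwv0
        apply hwv0
        rw [ht]
        congr 1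
        exact Fin.ext (by simp only [Fin.val_mk]; omega)
      · -- t.val = p.m, i.e. w = v_m
        have htm : t.val = p.m := by omega
        by_cases hpe : ∃ i : Fin p.m, e' = p.edge i
        · obtain ⟨i, hei⟩ := hpe
          have hii := i.isLt
          have hiv : i.val < p.m - 1 := by
            rcases Nat.lt_or_ge i.val (p.m - 1) with h | h
            · exact h
            · exfalso
              have hieq : i = ⟨p.m - 1, by omega⟩ := Fin.ext (by simp only [Fin.val_mk]; omega)
              exact hne (by rw [hei, hieq])
          refine cycB hnc p hinj (i.val + 1) (by omega) w e' he' ?_ ?_ ?_ ?_ ?_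
          · intro s hs hsm heq
            rw [hei] at heq
            have := congrArg Fin.val (p.edge_inj heq)
            simp only [Fin.val_mk] at this
            omega
          · intro s hsm heq
            rw [ht] at heq
            have := congrArg Fin.val (hinj heq)
            simp only [Fin.val_mk] at this
            omega
          · exact hw.2
          · exact hw.1
          · rw [hei]
            exact p.mem_right i
        · push_neg at hpe
          obtain ⟨x, hxe, hxw⟩ :=
            Set.exists_ne_of_one_lt_ncard (s := e') (by have := hcard2 e' he'; omega) w
          by_cases hxv : ∃ s : Fin (p.m + 1), x = p.vert s
          · obtain ⟨s, hs⟩ := hxv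
            have hsi := s.isLt
            have hsv : s.val < p.m := by
              rcases Nat.lt_or_ge s.val p.m with h | h
              · exact h
              · exfalso; apply hxw; rw [hs, ht]; congr 1
                exact Fin.ext (by omega)
            refine cycB hnc p hinj s.val hsv w e' he' ?_ ?_ ?_ ?_ ?_
            · intro u hu hum heq
              exact hpe ⟨u, hum⟩ heq
            · intro u hum heq
              rw [ht] at heq
              have := congrArg Fin.val (hinj heq)
              simp only [Fin.val_mk] at this
              omega
            · exact hw.2
            · exact hw.1
            · have heta : (⟨s.val, by omega⟩ : Fin (p.m + 1)) = s := Fin.ext rfl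
              rw [heta, ← hs]
              exact hxe
          · push_neg at hxv
            obtain ⟨q, hq⟩ := extend_path p hinj hm1 w x e' he' (fun i => hpe i)
              hw.2 hw.1 hxe
              (fun i hi heq => by
                rw [ht] at heq
                have := congrArg Fin.val (hinj heq)
                simp only [Fin.val_mk] at this
                omega)
              (fun i hi heq => hxv ⟨i, by omega⟩ heq)
              hxw
            have := hmax (p.m + 1) ⟨q, hq⟩
            omega
    · push_neg at hvert
      by_cases hpe : ∃ i : Fin p.m, e' = p.edge i
      · obtain ⟨i, hei⟩ := hpe
        have hii := i.isLt
        have hiv : i.val < p.m - 1 := by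
          rcases Nat.lt_or_ge i.val (p.m - 1) with h | h
          · exact h
          · exfalso
            have hieq : i = ⟨p.m - 1, by omega⟩ := Fin.ext (by simp only [Fin.val_mk]; omega)
            exact hne (by rw [hei, hieq])
        refine cycB hnc p hinj (i.val + 1) (by omega) w e' he' ?_ ?_ ?_ ?_ ?_
        · intro s hs hsm heq
          rw [hei] at heq
          have := congrArg Fin.val (p.edge_inj heq)
          simp only [Fin.val_mk] at this
          omega
        · intro s hsm heq
          exact hvert ⟨s, by omega⟩ heq
        · exact hw.2
        · exact hw.1
        · rw [hei]
          exact p.mem_right i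
      · push_neg at hpe
        obtain ⟨x, hxe, hxw⟩ :=
          Set.exists_ne_of_one_lt_ncard (s := e') (by have := hcard2 e' he'; omega) w
        by_cases hxv : ∃ s : Fin (p.m + 1), x = p.vert s
        · obtain ⟨s, hs⟩ := hxv
          have hsi := s.isLt
          rcases Nat.lt_or_ge s.val p.m with hsv | hsv
          · refine cycB hnc p hinj s.val hsv w e' he' ?_ ?_ ?_ ?_ ?_
            · intro u hu hum heq
              exact hpe ⟨u, hum⟩ heq
            · intro u hum heq
              exact hvert ⟨u, by omega⟩ heq
            · exact hw.2
            · exact hw.1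
            · have heta : (⟨s.val, by omega⟩ : Fin (p.m + 1)) = s := Fin.ext rfl
              rw [heta, ← hs]
              exact hxe
          · -- x = v_m : extend
            obtain ⟨q, hq⟩ := extend_path p hinj hm1 w x e' he' (fun i => hpe i)
              hw.2 hw.1 hxe
              (fun i hi heq => hvert ⟨i, by omega⟩ heq)
              (fun i hi heq => by
                rw [hs] at heq
                have := congrArg Fin.val (hinj heq)
                simp only [Fin.val_mk] at this
                omega)
              hxw
            have := hmax (p.m + 1) ⟨q, hq⟩
            omega
        · push_neg at hxv
          obtain ⟨q, hq⟩ := extend_path p hinj hm1 w x e' he' (fun i => hpe i)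
            hw.2 hw.1 hxe
            (fun i hi heq => hvert ⟨i, by omega⟩ heq)
            (fun i hi heq => hxv ⟨i, by omega⟩ heq)
            hxw
          have := hmax (p.m + 1) ⟨q, hq⟩
          omega
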